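/- Perfect matchings of {1,2,...,2n} are in bijection with oscillating tableaux of length 2n, i.e., sequences (∅ = μ^0, μ^1, ..., μ^{2n} = ∅) of integer partitions in which consecutive partitions differ by exactly one square. -/

import Mathlib

/-- `μ` and `ν` differ by exactly one square: one is obtained from the other by
adding a single box. -/
def OneBoxStep (μ ν : YoungDiagram) : Prop :=
  (μ ≤ ν ∧ ν.card = μ.card + 1) ∨ (ν ≤ μ ∧ μ.card = ν.card + 1)

/-- An oscillating tableau of length `2n`: a sequence
`(∅ = μ⁰, μ¹, …, μ^{2n} = ∅)` of partitions in which consecutive partitions differ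
by exactly one square. -/
def IsOscillating (n : ℕ) (mu : Fin (2 * n + 1) → YoungDiagram) : Prop :=
  mu 0 = ⊥ ∧ mu (Fin.last (2 * n)) = ⊥ ∧
  ∀ i : ℕ, (h : i < 2 * n) →
    OneBoxStep (mu ⟨i, by omega⟩) (mu ⟨i + 1, by omega⟩)

namespace Osc
set_option maxHeartbeats 1000000
open Finset

instance : DecidableEq YoungDiagram := fun μ ν =>
  decidable_of_iff (μ.cells = ν.cells) (by
    constructor
    · intro h; cases μ; cases ν; simpa using h
    · intro h; rw [h])

/-- rows where a box can be added at the end. -/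
def addRows (μ : YoungDiagram) : Finset ℕ :=
  (range (μ.colLen 0 + 1)).filter fun i => i = 0 ∨ μ.rowLen i < μ.rowLen (i - 1)

/-- rows where the last box can be removed. -/
def delRows (μ : YoungDiagram) : Finset ℕ :=
  (range (μ.colLen 0)).filter fun i => μ.rowLen (i + 1) < μ.rowLen i

lemma rowLen_pos_iff {μ : YoungDiagram} {i : ℕ} : 0 < μ.rowLen i ↔ i < μ.colLen 0 := by
  rw [← YoungDiagram.mem_iff_lt_rowLen, ← YoungDiagram.mem_iff_lt_colLen]

lemma mem_addRows {μ : YoungDiagram} {i : ℕ} :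
    i ∈ addRows μ ↔ i = 0 ∨ μ.rowLen i < μ.rowLen (i - 1) := by
  unfold addRows
  rw [mem_filter, mem_range, and_iff_right_iff_imp]
  rintro (rfl | h)
  · omega
  · have : 0 < μ.rowLen (i-1) := by omega
    rw [rowLen_pos_iff] at this
    omega

lemma mem_delRows {μ : YoungDiagram} {i : ℕ} :
    i ∈ delRows μ ↔ μ.rowLen (i + 1) < μ.rowLen i := by
  unfold delRows
  rw [mem_filter, mem_range, and_iff_right_iff_imp]
  intro h
  have : 0 < μ.rowLen i := by omega
  rwa [rowLen_pos_iff] at this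

lemma card_addRows (μ : YoungDiagram) : (addRows μ).card = (delRows μ).card + 1 := by
  have h : addRows μ = insert 0 ((delRows μ).image (· + 1)) := by
    ext j
    rw [mem_addRows, mem_insert, mem_image]
    cases j with
    | zero => simp
    | succ k =>
        constructor
        · rintro (h | h)
          · omega
          · right; refine ⟨k, mem_delRows.2 ?_, rfl⟩
            simpa using h
        · rintro (h | ⟨a, ha, h⟩)
          · omega
          · right
            obtain rfl : a = k := by omega
            simpa using mem_delRows.1 ha
  rw [h, card_insert_of_notMem (by simp), card_image_of_injective _ (fun a b h => by simpa using h)]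

lemma grow_lowerSet (μ : YoungDiagram) (i : ℕ)
    (h : i = 0 ∨ μ.rowLen i < μ.rowLen (i - 1)) :
    IsLowerSet (↑(insert (i, μ.rowLen i) μ.cells) : Set (ℕ × ℕ)) := by
  intro c d hdc hc
  simp only [coe_insert, Set.mem_insert_iff, mem_coe, YoungDiagram.mem_cells] at hc ⊢
  obtain hc | hc := hc
  · subst hc
    obtain ⟨h1, h2⟩ := hdc
    by_cases hd1 : d.1 = i
    · by_cases hd2 : d.2 = μ.rowLen i
      · left; exact Prod.ext hd1 hd2
      · right
        rw [YoungDiagram.mem_iff_lt_rowLen, hd1]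
        omega
    · right
      have hd1' : d.1 < i := lt_of_le_of_ne h1 hd1
      have hi : ¬ (i = 0) := by omega
      have h' : μ.rowLen i < μ.rowLen (i - 1) := h.resolve_left hi
      have : μ.rowLen (i - 1) ≤ μ.rowLen d.1 := μ.rowLen_anti _ _ (by omega)
      rw [YoungDiagram.mem_iff_lt_rowLen]
      omega
  · right; exact μ.isLowerSet hdc hc

/-- Add a box at the end of row `i` (junk value `μ` if not allowed). -/
def grow (μ : YoungDiagram) (i : ℕ) : YoungDiagram :=
  if h : i = 0 ∨ μ.rowLen i < μ.rowLen (i - 1) then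
    ⟨insert (i, μ.rowLen i) μ.cells, grow_lowerSet μ i h⟩
  else μ

lemma shrink_lowerSet (μ : YoungDiagram) (i : ℕ) (h : μ.rowLen (i + 1) < μ.rowLen i) :
    IsLowerSet (↑(μ.cells.erase (i, μ.rowLen i - 1)) : Set (ℕ × ℕ)) := by
  intro c d hdc hc
  rw [mem_coe, mem_erase] at hc ⊢
  obtain ⟨hcne, hc⟩ := hc
  rw [YoungDiagram.mem_cells] at hc
  have hd : d ∈ μ := μ.isLowerSet hdc hc
  refine ⟨?_, hd⟩
  rintro rfl
  obtain ⟨h1, h2⟩ := hdc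
  simp only at h1 h2
  have hc2 : c.2 < μ.rowLen c.1 := YoungDiagram.mem_iff_lt_rowLen.1 hc
  rcases Nat.lt_or_ge i c.1 with hlt | hge
  · have : μ.rowLen c.1 ≤ μ.rowLen (i + 1) := μ.rowLen_anti _ _ (by omega)
    omega
  · have hc1 : c.1 = i := by omega
    apply hcne
    have h2' : c.2 = μ.rowLen i - 1 := by rw [hc1] at hc2; omega
    exact Prod.ext hc1 h2'

/-- Remove the last box of row `i` (junk value `μ` if not allowed). -/
def shrink (μ : YoungDiagram) (i : ℕ) : YoungDiagram :=
  if h : μ.rowLen (i + 1) < μ.rowLen i then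
    ⟨μ.cells.erase (i, μ.rowLen i - 1), shrink_lowerSet μ i h⟩
  else μ

lemma yd_ext {μ ν : YoungDiagram} (h : μ.cells = ν.cells) : μ = ν := by
  cases μ; cases ν; simpa using h

lemma corner_not_mem (μ : YoungDiagram) (i : ℕ) : (i, μ.rowLen i) ∉ μ := by
  rw [YoungDiagram.mem_iff_lt_rowLen]; omega

lemma grow_cells {μ : YoungDiagram} {i : ℕ} (h : i ∈ addRows μ) :
    (grow μ i).cells = insert (i, μ.rowLen i) μ.cells := by
  rw [grow, dif_pos (mem_addRows.1 h)]

lemma le_grow {μ : YoungDiagram} {i : ℕ} (h : i ∈ addRows μ) : μ ≤ grow μ i := by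
  rw [← YoungDiagram.cells_subset_iff, grow_cells h]
  exact subset_insert _ _

lemma card_grow {μ : YoungDiagram} {i : ℕ} (h : i ∈ addRows μ) :
    (grow μ i).card = μ.card + 1 := by
  show (grow μ i).cells.card = μ.cells.card + 1
  rw [grow_cells h, card_insert_of_notMem (by simpa using corner_not_mem μ i)]

lemma delRows_rowLen_pos {μ : YoungDiagram} {i : ℕ} (h : i ∈ delRows μ) : 0 < μ.rowLen i := by
  have := mem_delRows.1 h; omega

lemma last_mem {μ : YoungDiagram} {i : ℕ} (h : i ∈ delRows μ) : (i, μ.rowLen i - 1) ∈ μ := by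
  rw [YoungDiagram.mem_iff_lt_rowLen]
  have := delRows_rowLen_pos h; omega

lemma shrink_cells {μ : YoungDiagram} {i : ℕ} (h : i ∈ delRows μ) :
    (shrink μ i).cells = μ.cells.erase (i, μ.rowLen i - 1) := by
  rw [shrink, dif_pos (mem_delRows.1 h)]

lemma shrink_le {μ : YoungDiagram} {i : ℕ} (h : i ∈ delRows μ) : shrink μ i ≤ μ := by
  rw [← YoungDiagram.cells_subset_iff, shrink_cells h]
  exact erase_subset _ _

lemma card_shrink {μ : YoungDiagram} {i : ℕ} (h : i ∈ delRows μ) :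
    μ.card = (shrink μ i).card + 1 := by
  show μ.cells.card = (shrink μ i).cells.card + 1
  rw [shrink_cells h, card_erase_of_mem (by simpa using last_mem h)]
  have : 0 < μ.cells.card := card_pos.2 ⟨_, by simpa using last_mem h⟩
  omega

/-- The diagrams covering `μ`. -/
def covers (μ : YoungDiagram) : Finset YoungDiagram := (addRows μ).image (grow μ)

/-- The diagrams covered by `μ`. -/
def covered (μ : YoungDiagram) : Finset YoungDiagram := (delRows μ).image (shrink μ)

lemma mem_covers {μ ν : YoungDiagram} :
    ν ∈ covers μ ↔ μ ≤ ν ∧ ν.card = μ.card + 1 := by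
  constructor
  · rintro hm
    obtain ⟨i, hi, rfl⟩ := mem_image.1 hm
    exact ⟨le_grow hi, card_grow hi⟩
  · rintro ⟨hle, hcard⟩
    have hsub : μ.cells ⊆ ν.cells := YoungDiagram.cells_subset_iff.2 hle
    have hlt : μ.cells.card < ν.cells.card := by
      have : ν.cells.card = μ.cells.card + 1 := hcard
      omega
    obtain ⟨c, hcν, hcμ⟩ := Finset.exists_of_ssubset
      (Finset.ssubset_iff_subset_ne.2 ⟨hsub, by intro h; rw [h] at hlt; omega⟩)
    have hcells : insert c μ.cells = ν.cells := by
      apply Finset.eq_of_subset_of_card_le (insert_subset hcν hsub)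
      rw [card_insert_of_notMem hcμ]
      exact le_of_eq hcard
    rcases c with ⟨i, j⟩
    simp only [YoungDiagram.mem_cells] at hcν hcμ
    have hj1 : μ.rowLen i ≤ j := by
      by_contra hcon
      exact hcμ (YoungDiagram.mem_iff_lt_rowLen.2 (by omega))
    have hj2 : j ≤ μ.rowLen i := by
      by_contra hcon
      push_neg at hcon
      have hmem : (i, j - 1) ∈ ν := ν.up_left_mem le_rfl (by omega) hcν
      have h1 : ((i, j - 1) : ℕ × ℕ) ∈ insert ((i, j) : ℕ × ℕ) μ.cells := by
        rw [hcells]; simpa using hmem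
      rcases mem_insert.1 h1 with h | h
      · rw [Prod.mk.injEq] at h; omega
      · have := YoungDiagram.mem_iff_lt_rowLen.1 (YoungDiagram.mem_cells _ |>.1 h)
        omega
    have hj : j = μ.rowLen i := le_antisymm hj2 hj1
    have hadd : i ∈ addRows μ := by
      rw [mem_addRows]
      rcases Nat.eq_zero_or_pos i with h0 | hpos
      · exact Or.inl h0
      · right
        have hmem : (i - 1, j) ∈ ν := ν.up_left_mem (by omega) le_rfl hcν
        have h1 : ((i - 1, j) : ℕ × ℕ) ∈ insert ((i, j) : ℕ × ℕ) μ.cells := by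
          rw [hcells]; simpa using hmem
        rcases mem_insert.1 h1 with h | h
        · rw [Prod.mk.injEq] at h; omega
        · have := YoungDiagram.mem_iff_lt_rowLen.1 (YoungDiagram.mem_cells _ |>.1 h)
          omega
    have hg : grow μ i = ν := by
      apply yd_ext
      rw [grow_cells hadd, ← hj]
      exact hcells
    rw [← hg]
    exact mem_image.2 ⟨i, hadd, rfl⟩

lemma mem_covered {μ ν : YoungDiagram} :
    ν ∈ covered μ ↔ ν ≤ μ ∧ μ.card = ν.card + 1 := by
  constructor
  · rintro hm
    obtain ⟨i, hi, rfl⟩ := mem_image.1 hm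
    exact ⟨shrink_le hi, card_shrink hi⟩
  · rintro ⟨hle, hcard⟩
    have hsub : ν.cells ⊆ μ.cells := YoungDiagram.cells_subset_iff.2 hle
    have hlt : ν.cells.card < μ.cells.card := by
      have : μ.cells.card = ν.cells.card + 1 := hcard
      omega
    obtain ⟨c, hcμ, hcν⟩ := Finset.exists_of_ssubset
      (Finset.ssubset_iff_subset_ne.2 ⟨hsub, by intro h; rw [h] at hlt; omega⟩)
    have hcells : ν.cells = μ.cells.erase c := by
      apply Finset.eq_of_subset_of_card_le (Finset.subset_erase.2 ⟨hsub, hcν⟩)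
      rw [card_erase_of_mem hcμ]
      have : μ.cells.card = ν.cells.card + 1 := hcard
      omega
    rcases c with ⟨i, j⟩
    simp only [YoungDiagram.mem_cells] at hcμ hcν
    have hjlt : j < μ.rowLen i := YoungDiagram.mem_iff_lt_rowLen.1 hcμ
    have hν : ∀ d : ℕ × ℕ, d ∈ μ → d ≠ (i, j) → d ∈ ν := by
      intro d hd hne
      rw [← YoungDiagram.mem_cells, hcells]
      exact mem_erase.2 ⟨hne, YoungDiagram.mem_cells _ |>.2 hd⟩
    have hcνmem : (i, j) ∉ ν := by
      rw [← YoungDiagram.mem_cells, hcells]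
      simp
    have hj : j + 1 = μ.rowLen i := by
      by_contra hcon
      have hmem : (i, j + 1) ∈ μ := YoungDiagram.mem_iff_lt_rowLen.2 (by omega)
      have h1 : (i, j + 1) ∈ ν := hν _ hmem (by simp)
      exact hcνmem (ν.up_left_mem le_rfl (by omega) h1)
    have hdel : i ∈ delRows μ := by
      rw [mem_delRows]
      by_contra hcon
      push_neg at hcon
      have hmem : (i + 1, j) ∈ μ := YoungDiagram.mem_iff_lt_rowLen.2 (by omega)
      have h1 : (i + 1, j) ∈ ν := hν _ hmem (by simp)
      exact hcνmem (ν.up_left_mem (by omega) le_rfl h1)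
    have hg : shrink μ i = ν := by
      apply yd_ext
      rw [shrink_cells hdel, hcells]
      have hje : μ.rowLen i - 1 = j := by omega
      rw [hje]
    rw [← hg]
    exact mem_image.2 ⟨i, hdel, rfl⟩

lemma card_covers (μ : YoungDiagram) : (covers μ).card = (covered μ).card + 1 := by
  have h1 : (covers μ).card = (addRows μ).card := by
    apply card_image_of_injOn
    intro a ha b hb hab
    by_contra hne
    have hmem : ((a, μ.rowLen a) : ℕ × ℕ) ∈ (grow μ a).cells := by
      rw [grow_cells ha]; exact mem_insert_self _ _
    rw [hab, grow_cells hb, mem_insert] at hmem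
    rcases hmem with h | h
    · rw [Prod.mk.injEq] at h; exact hne h.1
    · exact corner_not_mem μ a (YoungDiagram.mem_cells _ |>.1 h)
  have h2 : (covered μ).card = (delRows μ).card := by
    apply card_image_of_injOn
    intro a ha b hb hab
    by_contra hne
    have hmem : ((a, μ.rowLen a - 1) : ℕ × ℕ) ∉ (shrink μ a).cells := by
      rw [shrink_cells ha]; simp
    rw [hab, shrink_cells hb, mem_erase] at hmem
    push_neg at hmem
    have := hmem (by intro h; exact hne (congrArg Prod.fst h))
    exact this (YoungDiagram.mem_cells _ |>.2 (last_mem ha))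
  rw [h1, h2, card_addRows]

lemma card_lt_of_lt {μ ν : YoungDiagram} (h : μ ≤ ν) (hne : μ ≠ ν) : μ.card < ν.card := by
  apply Finset.card_lt_card
  rw [YoungDiagram.cells_ssubset_iff]
  exact lt_of_le_of_ne h hne

lemma eq_of_le_of_card_le {μ ν : YoungDiagram} (h : μ ≤ ν) (hc : ν.card ≤ μ.card) : μ = ν :=
  yd_ext (Finset.eq_of_subset_of_card_le (YoungDiagram.cells_subset_iff.2 h) hc)

lemma card_sup_add_card_inf (μ ν : YoungDiagram) :
    (μ ⊔ ν).card + (μ ⊓ ν).card = μ.card + ν.card := by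
  show (μ ⊔ ν).cells.card + (μ ⊓ ν).cells.card = μ.cells.card + ν.cells.card
  rw [YoungDiagram.cells_sup, YoungDiagram.cells_inf]
  exact Finset.card_union_add_card_inter _ _

lemma covers_inter_eq_sup {μ ν ρ : YoungDiagram} (hne : μ ≠ ν)
    (h : ρ ∈ covers μ ∩ covers ν) : ρ = μ ⊔ ν := by
  rw [mem_inter, mem_covers, mem_covers] at h
  obtain ⟨⟨h1, h2⟩, h3, h4⟩ := h
  have hle : μ ⊔ ν ≤ ρ := sup_le h1 h3
  have hμν : μ ≠ μ ⊔ ν := by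
    intro hcon
    have : ν ≤ μ := by rw [hcon]; exact le_sup_right
    exact hne (eq_of_le_of_card_le this (by omega)).symm
  have h5 : μ.card < (μ ⊔ ν).card := card_lt_of_lt le_sup_left hμν
  have h6 : (μ ⊔ ν).card ≤ ρ.card := Finset.card_le_card (YoungDiagram.cells_subset_iff.2 hle)
  exact (eq_of_le_of_card_le hle (by omega)).symm

lemma covered_inter_eq_inf {μ ν ρ : YoungDiagram} (hne : μ ≠ ν)
    (h : ρ ∈ covered μ ∩ covered ν) : ρ = μ ⊓ ν := by
  rw [mem_inter, mem_covered, mem_covered] at h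
  obtain ⟨⟨h1, h2⟩, h3, h4⟩ := h
  have hle : ρ ≤ μ ⊓ ν := le_inf h1 h3
  have hμν : μ ⊓ ν ≠ μ := by
    intro hcon
    have : μ ≤ ν := by rw [← hcon]; exact inf_le_right
    exact hne (eq_of_le_of_card_le this (by omega))
  have h5 : (μ ⊓ ν).card < μ.card := card_lt_of_lt inf_le_left hμν
  have h6 : ρ.card ≤ (μ ⊓ ν).card := Finset.card_le_card (YoungDiagram.cells_subset_iff.2 hle)
  exact eq_of_le_of_card_le hle (by omega)

lemma card_covers_inter {μ ν : YoungDiagram} (hne : μ ≠ ν) :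
    (covers μ ∩ covers ν).card = (covered μ ∩ covered ν).card := by
  rcases (covers μ ∩ covers ν).eq_empty_or_nonempty with hA | ⟨ρ, hρ⟩
  · rcases (covered μ ∩ covered ν).eq_empty_or_nonempty with hB | ⟨σ, hσ⟩
    · rw [hA, hB]
    · exfalso
      have hσ' := covered_inter_eq_inf hne hσ
      rw [mem_inter, mem_covered, mem_covered] at hσ
      obtain ⟨⟨h1, h2⟩, h3, h4⟩ := hσ
      have hid := card_sup_add_card_inf μ ν
      have hmem : μ ⊔ ν ∈ covers μ ∩ covers ν := by
        rw [mem_inter, mem_covers, mem_covers]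
        subst hσ'
        exact ⟨⟨le_sup_left, by omega⟩, le_sup_right, by omega⟩
      rw [hA] at hmem
      exact absurd hmem (notMem_empty _)
  · have hρ' := covers_inter_eq_sup hne hρ
    have hA : covers μ ∩ covers ν = {μ ⊔ ν} := by
      apply Finset.eq_singleton_iff_unique_mem.2
      exact ⟨hρ' ▸ hρ, fun x hx => covers_inter_eq_sup hne hx⟩
    rw [mem_inter, mem_covers, mem_covers] at hρ
    obtain ⟨⟨h1, h2⟩, h3, h4⟩ := hρ
    have hid := card_sup_add_card_inf μ ν
    have hmem : μ ⊓ ν ∈ covered μ ∩ covered ν := by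
      rw [mem_inter, mem_covered, mem_covered]
      subst hρ'
      exact ⟨⟨inf_le_left, by omega⟩, inf_le_right, by omega⟩
    have hB : covered μ ∩ covered ν = {μ ⊓ ν} := by
      apply Finset.eq_singleton_iff_unique_mem.2
      exact ⟨hmem, fun x hx => covered_inter_eq_inf hne hx⟩
    rw [hA, hB]; simp

lemma mem_covers_iff_mem_covered {μ ν : YoungDiagram} :
    ν ∈ covers μ ↔ μ ∈ covered ν := by
  rw [mem_covers, mem_covered]


/-- The key exchange identity (`DU = UD + 1`). -/
lemma exchange (lam : YoungDiagram) (g : YoungDiagram → ℕ) :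
    ∑ ν ∈ covers lam, ∑ ρ ∈ covered ν, g ρ
      = (∑ ρ ∈ covered lam, ∑ ν ∈ covers ρ, g ν) + g lam := by
  set T : Finset YoungDiagram := (covers lam).biUnion covered with hT
  set T' : Finset YoungDiagram := (covered lam).biUnion covers with hT'
  have hL : ∑ ν ∈ covers lam, ∑ ρ ∈ covered ν, g ρ
      = ∑ ρ ∈ T, ∑ _x ∈ covers lam ∩ covers ρ, g ρ := by
    apply Finset.sum_comm' (s := covers lam) (t := fun ν => covered ν)
      (t' := T) (s' := fun ρ => covers lam ∩ covers ρ) (f := fun _ ρ => g ρ)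
    intro x y
    constructor
    · rintro ⟨hx, hy⟩
      exact ⟨mem_inter.2 ⟨hx, mem_covers_iff_mem_covered.2 hy⟩, mem_biUnion.2 ⟨x, hx, hy⟩⟩
    · rintro ⟨hx, _⟩
      rw [mem_inter] at hx
      exact ⟨hx.1, mem_covers_iff_mem_covered.1 hx.2⟩
  have hR : ∑ ρ ∈ covered lam, ∑ ν ∈ covers ρ, g ν
      = ∑ ρ ∈ T', ∑ _x ∈ covered lam ∩ covered ρ, g ρ := by
    apply Finset.sum_comm' (s := covered lam) (t := fun ν => covers ν)
      (t' := T') (s' := fun ρ => covered lam ∩ covered ρ) (f := fun _ ρ => g ρ)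
    intro x y
    constructor
    · rintro ⟨hx, hy⟩
      exact ⟨mem_inter.2 ⟨hx, mem_covers_iff_mem_covered.1 hy⟩, mem_biUnion.2 ⟨x, hx, hy⟩⟩
    · rintro ⟨hx, _⟩
      rw [mem_inter] at hx
      exact ⟨hx.1, mem_covers_iff_mem_covered.2 hx.2⟩
  have hconst : ∀ (u : Finset YoungDiagram) (c : YoungDiagram → Finset YoungDiagram),
      ∑ ρ ∈ u, ∑ _x ∈ c ρ, g ρ = ∑ ρ ∈ u, (c ρ).card * g ρ := by
    intro u c
    apply Finset.sum_congr rfl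
    intro ρ _
    rw [Finset.sum_const, smul_eq_mul]
  rw [hL, hR, hconst, hconst]
  set S : Finset YoungDiagram := insert lam (T ∪ T') with hS
  have hLS : ∑ ρ ∈ T, (covers lam ∩ covers ρ).card * g ρ
      = ∑ ρ ∈ S, (covers lam ∩ covers ρ).card * g ρ := by
    apply Finset.sum_subset
    · intro x hx; exact mem_insert_of_mem (mem_union_left _ hx)
    · intro x _ hx
      rcases (covers lam ∩ covers x).eq_empty_or_nonempty with he | ⟨y, hy⟩
      · rw [he]; simp
      · exfalso
        apply hx
        rw [mem_inter] at hy
        exact mem_biUnion.2 ⟨y, hy.1, mem_covers_iff_mem_covered.1 hy.2⟩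
  have hRS : ∑ ρ ∈ T', (covered lam ∩ covered ρ).card * g ρ
      = ∑ ρ ∈ S, (covered lam ∩ covered ρ).card * g ρ := by
    apply Finset.sum_subset
    · intro x hx; exact mem_insert_of_mem (mem_union_right _ hx)
    · intro x _ hx
      rcases (covered lam ∩ covered x).eq_empty_or_nonempty with he | ⟨y, hy⟩
      · rw [he]; simp
      · exfalso
        apply hx
        rw [mem_inter] at hy
        exact mem_biUnion.2 ⟨y, hy.1, mem_covers_iff_mem_covered.2 hy.2⟩
  rw [hLS, hRS]
  have hsplit : ∑ ρ ∈ S, (covers lam ∩ covers ρ).card * g ρ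
      = ∑ ρ ∈ S, ((covered lam ∩ covered ρ).card * g ρ + if ρ = lam then g ρ else 0) := by
    apply Finset.sum_congr rfl
    intro ρ _
    by_cases hρ : ρ = lam
    · subst hρ
      rw [if_pos rfl, inter_self, inter_self, card_covers]
      ring
    · rw [if_neg hρ, card_covers_inter (fun h => hρ h.symm)]
      ring
  rw [hsplit, Finset.sum_add_distrib, Finset.sum_ite_eq' S lam g,
    if_pos (mem_insert_self _ _)]

/-- one-box neighbours -/
def nbrs (μ : YoungDiagram) : Finset YoungDiagram := covers μ ∪ covered μ

lemma disj_covers (μ : YoungDiagram) : Disjoint (covers μ) (covered μ) := by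
  rw [Finset.disjoint_left]
  intro ν h1 h2
  rw [mem_covers] at h1
  rw [mem_covered] at h2
  omega

/-- number of oscillating paths of length `m` from `⊥` to `μ` -/
def p : ℕ → YoungDiagram → ℕ
  | 0, μ => if μ = ⊥ then 1 else 0
  | m + 1, μ => ∑ ν ∈ nbrs μ, p m ν

lemma p_succ (m : ℕ) (μ : YoungDiagram) :
    p (m + 1) μ = (∑ ν ∈ covers μ, p m ν) + ∑ ν ∈ covered μ, p m ν := by
  show ∑ ν ∈ nbrs μ, p m ν = _
  rw [nbrs, Finset.sum_union (disj_covers μ)]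

lemma bot_card : (⊥ : YoungDiagram).card = 0 := by
  show (⊥ : YoungDiagram).cells.card = 0
  simp [YoungDiagram.cells_bot]

lemma p_zero_covers (lam : YoungDiagram) : ∑ ν ∈ covers lam, p 0 ν = 0 := by
  apply Finset.sum_eq_zero
  intro ν hν
  rw [mem_covers] at hν
  have : ν ≠ ⊥ := by
    intro h
    rw [h, bot_card] at hν
    omega
  simp [p, this]

lemma down_up (m : ℕ) (lam : YoungDiagram) :
    ∑ ν ∈ covers lam, p (m + 1) ν = (m + 1) * p m lam := by
  induction m generalizing lam with
  | zero =>
      have : ∀ ν, p 1 ν = (∑ ρ ∈ covers ν, p 0 ρ) + ∑ ρ ∈ covered ν, p 0 ρ :=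
        fun ν => p_succ 0 ν
      calc ∑ ν ∈ covers lam, p 1 ν
          = ∑ ν ∈ covers lam, ((∑ ρ ∈ covers ν, p 0 ρ) + ∑ ρ ∈ covered ν, p 0 ρ) :=
            Finset.sum_congr rfl fun ν _ => this ν
        _ = ∑ ν ∈ covers lam, ∑ ρ ∈ covered ν, p 0 ρ := by
            simp only [p_zero_covers, zero_add]
        _ = (∑ ρ ∈ covered lam, ∑ ν ∈ covers ρ, p 0 ν) + p 0 lam := exchange lam (p 0)
        _ = p 0 lam := by simp only [p_zero_covers, Finset.sum_const_zero, zero_add]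
        _ = 1 * p 0 lam := (one_mul _).symm
  | succ k ih =>
      calc ∑ ν ∈ covers lam, p (k + 2) ν
          = ∑ ν ∈ covers lam, ((∑ ρ ∈ covers ν, p (k + 1) ρ) + ∑ ρ ∈ covered ν, p (k + 1) ρ) :=
            Finset.sum_congr rfl fun ν _ => p_succ (k + 1) ν
        _ = (∑ ν ∈ covers lam, (k + 1) * p k ν)
            + ∑ ν ∈ covers lam, ∑ ρ ∈ covered ν, p (k + 1) ρ := by
            rw [← Finset.sum_add_distrib]
            exact Finset.sum_congr rfl fun ν _ => by rw [ih ν]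
        _ = (∑ ν ∈ covers lam, (k + 1) * p k ν)
            + ((∑ ρ ∈ covered lam, ∑ ν ∈ covers ρ, p (k + 1) ν) + p (k + 1) lam) := by
            rw [exchange lam (p (k + 1))]
        _ = (∑ ν ∈ covers lam, (k + 1) * p k ν)
            + ((∑ ρ ∈ covered lam, (k + 1) * p k ρ) + p (k + 1) lam) := by
            congr 1
            congr 1
            exact Finset.sum_congr rfl fun ρ _ => ih ρ
        _ = (k + 1) * ((∑ ν ∈ covers lam, p k ν) + ∑ ρ ∈ covered lam, p k ρ)
            + p (k + 1) lam := by
            rw [mul_add, Finset.mul_sum, Finset.mul_sum]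
            omega
        _ = (k + 1) * p (k + 1) lam + p (k + 1) lam := by rw [← p_succ]
        _ = (k + 2) * p (k + 1) lam := by ring

lemma covered_bot : covered (⊥ : YoungDiagram) = ∅ := by
  ext ν
  rw [mem_covered]
  simp only [Finset.notMem_empty, iff_false]
  rintro ⟨h1, h2⟩
  rw [bot_card] at h2
  omega

/-- the odd double factorial -/
def df : ℕ → ℕ
  | 0 => 1
  | n + 1 => (2 * n + 1) * df n

lemma p_two_mul (n : ℕ) : p (2 * n) ⊥ = df n := by
  induction n with
  | zero => simp [p, df]
  | succ k ih =>
      have h1 : 2 * (k + 1) = (2 * k + 1) + 1 := by ring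
      rw [h1]
      show ∑ ν ∈ nbrs ⊥, p (2 * k + 1) ν = df (k + 1)
      rw [nbrs, covered_bot, Finset.union_empty, down_up, df]
      rw [ih]

lemma mem_nbrs {μ ν : YoungDiagram} : ν ∈ nbrs μ ↔ OneBoxStep μ ν := by
  rw [nbrs, Finset.mem_union, mem_covers, mem_covered, OneBoxStep]

lemma obs_symm {μ ν : YoungDiagram} (h : OneBoxStep μ ν) : OneBoxStep ν μ := h.symm

/-- valid step sequences -/
def Steps {m : ℕ} (f : Fin (m + 1) → YoungDiagram) : Prop :=
  ∀ i : Fin m, OneBoxStep (f i.castSucc) (f i.succ)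

/-- oscillating paths of length `m` from `⊥` to `lam` -/
def OT (m : ℕ) (lam : YoungDiagram) : Type :=
  {f : Fin (m + 1) → YoungDiagram // f 0 = ⊥ ∧ f (Fin.last m) = lam ∧ Steps f}

/-- second-to-last diagram of a path -/
def sl {m : ℕ} {lam : YoungDiagram} (x : OT (m + 1) lam) : ↥(nbrs lam) :=
  ⟨x.1 (Fin.castSucc (Fin.last m)), by
    have h := x.2.2.2 (Fin.last m)
    rw [Fin.succ_last, x.2.2.1] at h
    exact mem_nbrs.2 (obs_symm h)⟩

/-- Fiber of `sl` over `ν` is equivalent to paths to `ν`. -/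
def fiberEquiv (m : ℕ) (lam : YoungDiagram) (ν : ↥(nbrs lam)) :
    {x : OT (m + 1) lam // sl x = ν} ≃ OT m ν.1 where
  toFun x := ⟨Fin.init x.1.1, by
    have h0 : x.1.1 0 = ⊥ := x.1.2.1
    refine ⟨?_, ?_, ?_⟩
    · show x.1.1 (Fin.castSucc 0) = ⊥
      rwa [Fin.castSucc_zero]
    · show x.1.1 (Fin.castSucc (Fin.last m)) = ν.1
      have := congrArg Subtype.val x.2
      exact this
    · intro i
      have h := x.1.2.2.2 i.castSucc
      show OneBoxStep (x.1.1 i.castSucc.castSucc) (x.1.1 i.succ.castSucc)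
      rwa [← Fin.succ_castSucc]⟩
  invFun g := ⟨⟨Fin.snoc g.1 lam, by
    refine ⟨?_, ?_, ?_⟩
    · show (Fin.snoc g.1 lam : Fin (m + 2) → YoungDiagram) (Fin.castSucc 0) = ⊥
      rw [Fin.snoc_castSucc]
      exact g.2.1
    · exact Fin.snoc_last _ _
    · intro i
      refine Fin.lastCases ?_ ?_ i
      · have hgoal : OneBoxStep ν.1 lam := obs_symm (mem_nbrs.1 ν.2)
        simpa [Fin.succ_last, Fin.snoc_castSucc, Fin.snoc_last, g.2.2.1] using hgoal
      · intro j
        have hj := g.2.2.2 j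
        simpa only [Fin.succ_castSucc, Fin.snoc_castSucc] using hj⟩, by
      apply Subtype.ext
      show (Fin.snoc g.1 lam : Fin (m + 2) → YoungDiagram) (Fin.castSucc (Fin.last m)) = ν.1
      rw [Fin.snoc_castSucc]
      exact g.2.2.1⟩
  left_inv x := by
    apply Subtype.ext
    apply Subtype.ext
    show Fin.snoc (Fin.init x.1.1) lam = x.1.1
    have h := Fin.snoc_init_self x.1.1
    rwa [x.1.2.2.1] at h
  right_inv g := by
    apply Subtype.ext
    funext i
    simp [Fin.init]

lemma ot_equiv_fin : ∀ (m : ℕ) (lam : YoungDiagram), Nonempty (OT m lam ≃ Fin (p m lam)) := by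
  intro m
  induction m with
  | zero =>
      intro lam
      by_cases h : lam = ⊥
      · subst h
        have hu : ∀ x : OT 0 ⊥, x = ⟨fun _ => ⊥, rfl, rfl, fun i => i.elim0⟩ := by
          intro x
          apply Subtype.ext
          funext i
          have : i = 0 := Fin.fin_one_eq_zero i
          rw [this]
          exact x.2.1
        have hp : p 0 (⊥ : YoungDiagram) = 1 := by simp [p]
        rw [hp]
        exact ⟨{ toFun := fun _ => 0
                 invFun := fun _ => ⟨fun _ => ⊥, rfl, rfl, fun i => i.elim0⟩
                 left_inv := fun x => (hu x).symm
                 right_inv := fun i => (Fin.fin_one_eq_zero i).symm }⟩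
      · have hp : p 0 lam = 0 := by simp [p, h]
        rw [hp]
        have : IsEmpty (OT 0 lam) := ⟨fun x => h (x.2.2.1.symm.trans x.2.1 |>.symm ▸ rfl)⟩
        exact ⟨Equiv.equivOfIsEmpty _ _⟩
  | succ m ih =>
      intro lam
      have e1 : OT (m + 1) lam ≃ Σ ν : ↥(nbrs lam), {x : OT (m + 1) lam // sl x = ν} :=
        (Equiv.sigmaFiberEquiv sl).symm
      have e2 : ∀ ν : ↥(nbrs lam), {x : OT (m + 1) lam // sl x = ν} ≃ Fin (p m ν.1) :=
        fun ν => (fiberEquiv m lam ν).trans (Classical.choice (ih ν.1))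
      have e3 : OT (m + 1) lam ≃ Σ ν : ↥(nbrs lam), Fin (p m ν.1) :=
        e1.trans (Equiv.sigmaCongrRight e2)
      have hcard : Fintype.card (Σ ν : ↥(nbrs lam), Fin (p m ν.1))
          = Fintype.card (Fin (p (m + 1) lam)) := by
        rw [Fintype.card_sigma, Fintype.card_fin]
        show ∑ ν : ↥(nbrs lam), Fintype.card (Fin (p m ν.1)) = p (m + 1) lam
        simp only [Fintype.card_fin]
        show ∑ ν ∈ (nbrs lam).attach, p m ν.1 = p (m + 1) lam
        rw [Finset.sum_attach (nbrs lam) (p m)]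
        rfl
      exact ⟨e3.trans (Fintype.equivOfCardEq hcard)⟩

section Matchings

variable {α : Type*} [LinearOrder α] [DecidableEq α]

/-- perfect matchings of a finset -/
def M (s : Finset α) : Type _ := {P : Finpartition s // ∀ b ∈ P.parts, b.card = 2}

variable {s : Finset α} {a : α}

lemma erase_part_card (ha : a ∈ s) (P : M s) : ((P.1.part a).erase a).card = 1 := by
  have hcard : (P.1.part a).card = 2 := P.2 _ ((P.1.part_mem).2 ha)
  rw [Finset.card_erase_of_mem (P.1.mem_part ha), hcard]

/-- the partner of `a` in a perfect matching -/
def partner (ha : a ∈ s) (P : M s) : α :=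
  ((P.1.part a).erase a).min' (Finset.card_pos.1 (by rw [erase_part_card ha P]; omega))

lemma partner_mem_erase (ha : a ∈ s) (P : M s) : partner ha P ∈ (P.1.part a).erase a :=
  Finset.min'_mem _ _

lemma partner_ne (ha : a ∈ s) (P : M s) : partner ha P ≠ a :=
  (Finset.mem_erase.1 (partner_mem_erase ha P)).1

lemma part_eq_pair (ha : a ∈ s) (P : M s) : P.1.part a = {a, partner ha P} := by
  have h1 : (P.1.part a).erase a = {partner ha P} := by
    obtain ⟨c, hc⟩ := Finset.card_eq_one.1 (erase_part_card ha P)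
    have := partner_mem_erase ha P
    rw [hc] at this ⊢
    rw [Finset.mem_singleton] at this
    rw [this]
  have h2 := Finset.insert_erase (P.1.mem_part ha)
  rw [h1] at h2
  exact h2.symm

lemma partner_mem (ha : a ∈ s) (P : M s) : partner ha P ∈ s.erase a := by
  have h := partner_mem_erase ha P
  rw [Finset.mem_erase] at h ⊢
  exact ⟨h.1, P.1.le ((P.1.part_mem).2 ha) h.2⟩

/-- partner as a function into the subtype -/
def partnerFun (ha : a ∈ s) : M s → ↥(s.erase a) := fun P => ⟨partner ha P, partner_mem ha P⟩

lemma not_mem_of_ne_pair {ha : a ∈ s} {b : α} {P : M s} (hP : partner ha P = b)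
    {d : Finset α} (hd : d ∈ P.1.parts) (hne : d ≠ {a, b}) : a ∉ d ∧ b ∉ d := by
  have hpair : P.1.part a = {a, b} := by rw [part_eq_pair ha P, hP]
  constructor
  · intro had
    exact hne ((P.1.part_eq_of_mem hd had).symm.trans hpair)
  · intro hbd
    have hbpart : b ∈ P.1.part a := by rw [hpair]; simp
    exact hne ((P.1.eq_of_mem_parts hd ((P.1.part_mem).2 ha) hbd hbpart).trans hpair)

variable (ha : a ∈ s) {b : α} (hb : b ∈ s.erase a)

lemma hne_ab (hb : b ∈ s.erase a) : a ≠ b := fun h => (Finset.mem_erase.1 hb).1 h.symm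

lemma sdiff_pair_eq (ha : a ∈ s) (hb : b ∈ s.erase a) :
    s \ {a, b} = (s.erase a).erase b := by
  ext x
  simp only [Finset.mem_sdiff, Finset.mem_insert, Finset.mem_singleton, Finset.mem_erase]
  tauto

lemma sup_pair_eq (ha : a ∈ s) (hb : b ∈ s.erase a) :
    (s.erase a).erase b ⊔ ({a, b} : Finset α) = s := by
  have hbs : b ∈ s := (Finset.mem_erase.1 hb).2
  ext x
  simp only [Finset.sup_eq_union, Finset.mem_union, Finset.mem_erase, Finset.mem_insert,
    Finset.mem_singleton]
  constructor
  · rintro (⟨_, _, h⟩ | (rfl | rfl)) <;> first | exact h | exact ha | exact hbs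
  · intro hx
    by_cases h1 : x = a
    · exact Or.inr (Or.inl h1)
    · by_cases h2 : x = b
      · exact Or.inr (Or.inr h2)
      · exact Or.inl ⟨h2, h1, hx⟩

lemma disj_pair (hb : b ∈ s.erase a) :
    Disjoint ((s.erase a).erase b) ({a, b} : Finset α) := by
  rw [Finset.disjoint_right]
  intro x hx hmem
  rw [Finset.mem_insert, Finset.mem_singleton] at hx
  rw [Finset.mem_erase, Finset.mem_erase] at hmem
  rcases hx with rfl | rfl
  · exact hmem.2.1 rfl
  · exact hmem.1 rfl

lemma avoid_parts' (P : Finpartition s) (t : Finset α) :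
    (P.avoid t).parts = (P.parts.image (· \ t)).erase ⊥ := by
  rw [Finpartition.avoid]
  rfl

lemma pair_ne_bot (a b : α) : ({a, b} : Finset α) ≠ ⊥ := by
  rw [Finset.bot_eq_empty]
  exact Finset.insert_ne_empty _ _

lemma disj_of_not_mem {d : Finset α} (h1 : a ∉ d) (h2 : b ∉ d) :
    Disjoint d ({a, b} : Finset α) := by
  rw [Finset.disjoint_right]
  intro x hx
  rw [Finset.mem_insert, Finset.mem_singleton] at hx
  rcases hx with rfl | rfl
  · exact h1
  · exact h2

lemma partner_eq_of_pair {P : M s} (ha : a ∈ s) (h : P.1.part a = {a, b}) :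
    partner ha P = b := by
  have hm := partner_mem_erase ha P
  rw [h, Finset.mem_erase] at hm
  rcases Finset.mem_insert.1 hm.2 with h1 | h1
  · exact absurd h1 hm.1
  · exact Finset.mem_singleton.1 h1

lemma image_sdiff_parts {P : M s} {ha : a ∈ s} (hP : partner ha P = b) :
    (P.1.parts.image (· \ ({a, b} : Finset α))).erase ⊥ = P.1.parts.erase {a, b} := by
  ext c
  simp only [Finset.mem_erase, Finset.mem_image, Finset.bot_eq_empty]
  constructor
  · rintro ⟨hcne, d, hd, rfl⟩
    by_cases hdp : d = {a, b}
    · subst hdp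
      simp at hcne
    · have hnm := not_mem_of_ne_pair hP hd hdp
      rw [Finset.sdiff_eq_self_of_disjoint (disj_of_not_mem hnm.1 hnm.2)]
      exact ⟨hdp, hd⟩
  · rintro ⟨hcne, hc⟩
    have hnm := not_mem_of_ne_pair hP hc hcne
    refine ⟨?_, c, hc, Finset.sdiff_eq_self_of_disjoint (disj_of_not_mem hnm.1 hnm.2)⟩
    intro h
    exact P.1.bot_notMem (by rw [Finset.bot_eq_empty, ← h]; exact hc)

/-- the matching obtained by adding the pair `{a, b}` -/
def extendM (ha : a ∈ s) (hb : b ∈ s.erase a) (Q : M ((s.erase a).erase b)) : M s :=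
  ⟨Q.1.extend (pair_ne_bot a b) (disj_pair hb) (sup_pair_eq ha hb), by
    intro c hc
    rw [Finpartition.extend_parts, Finset.mem_insert] at hc
    rcases hc with rfl | hc
    · exact Finset.card_pair (hne_ab hb)
    · exact Q.2 c hc⟩

lemma extendM_part (ha : a ∈ s) (hb : b ∈ s.erase a) (Q : M ((s.erase a).erase b)) :
    (extendM ha hb Q).1.part a = {a, b} := by
  apply Finpartition.part_eq_of_mem
  · rw [extendM, Finpartition.extend_parts]
    exact Finset.mem_insert_self _ _
  · simp

/-- the matching obtained by removing the part of `a` -/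
def restrictM (ha : a ∈ s) (hb : b ∈ s.erase a) (P : M s) (hP : partner ha P = b) :
    M ((s.erase a).erase b) :=
  ⟨(P.1.avoid {a, b}).copy (sdiff_pair_eq ha hb), by
    intro c hc
    rw [Finpartition.copy_parts, Finpartition.mem_avoid] at hc
    obtain ⟨d, hd, hdle, rfl⟩ := hc
    have hdne : d ≠ {a, b} := fun h => hdle (le_of_eq h)
    have hnm := not_mem_of_ne_pair hP hd hdne
    rw [Finset.sdiff_eq_self_of_disjoint (disj_of_not_mem hnm.1 hnm.2)]
    exact P.2 d hd⟩

/-- Fibers of the partner map are matchings of the smaller set. -/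
def matchFiberEquiv (ha : a ∈ s) (hb : b ∈ s.erase a) :
    {P : M s // partnerFun ha P = ⟨b, hb⟩} ≃ M ((s.erase a).erase b) where
  toFun P := restrictM ha hb P.1 (congrArg Subtype.val P.2)
  invFun Q := ⟨extendM ha hb Q, by
    apply Subtype.ext
    exact partner_eq_of_pair ha (extendM_part ha hb Q)⟩
  left_inv P := by
    apply Subtype.ext
    apply Subtype.ext
    apply Finpartition.ext
    have hP : partner ha P.1 = b := congrArg Subtype.val P.2
    have hpart : ({a, b} : Finset α) ∈ P.1.1.parts := by
      have := (P.1.1.part_mem).2 ha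
      rwa [part_eq_pair ha P.1, hP] at this
    show insert {a, b} ((P.1.1.avoid {a, b}).copy (sdiff_pair_eq ha hb)).parts = P.1.1.parts
    rw [Finpartition.copy_parts, avoid_parts', image_sdiff_parts hP,
      Finset.insert_erase hpart]
  right_inv Q := by
    apply Subtype.ext
    apply Finpartition.ext
    show (((extendM ha hb Q).1.parts.image (· \ ({a, b} : Finset α))).erase ⊥) = Q.1.parts
    have himg : Q.1.parts.image (· \ ({a, b} : Finset α)) = Q.1.parts := by
      rw [Finset.image_congr (g := id) ?_, Finset.image_id]
      intro d hd
      rw [Finset.mem_coe] at hd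
      have hsub : d ⊆ (s.erase a).erase b := Q.1.le hd
      have h1 : a ∉ d := fun h => by
        have := hsub h
        rw [Finset.mem_erase, Finset.mem_erase] at this
        exact this.2.1 rfl
      have h2 : b ∉ d := fun h => by
        have := hsub h
        rw [Finset.mem_erase] at this
        exact this.1 rfl
      exact Finset.sdiff_eq_self_of_disjoint (disj_of_not_mem h1 h2)
    rw [extendM, Finpartition.extend_parts, Finset.image_insert, Finset.sdiff_self, himg,
      Finset.bot_eq_empty, Finset.erase_insert ?_]
    intro h
    exact Q.1.bot_notMem (by rw [Finset.bot_eq_empty]; exact h)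

lemma m_equiv_fin : ∀ (k : ℕ) (s : Finset α), s.card = 2 * k → Nonempty (M s ≃ Fin (df k)) := by
  intro k
  induction k with
  | zero =>
      intro s hs
      rw [Nat.mul_zero, Finset.card_eq_zero] at hs
      subst hs
      have P0 : M (∅ : Finset α) := ⟨(Finpartition.empty (Finset α)).copy Finset.bot_eq_empty,
        by
          intro c hc
          rw [Finpartition.copy_parts, Finpartition.empty_parts] at hc
          exact absurd hc (Finset.notMem_empty c)⟩
      have hu : ∀ P Q : M (∅ : Finset α), P = Q := by
        intro P Q
        apply Subtype.ext
        apply Finpartition.ext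
        rw [Finpartition.parts_eq_empty_iff.2 Finset.bot_eq_empty.symm,
          Finpartition.parts_eq_empty_iff.2 Finset.bot_eq_empty.symm]
      rw [show df 0 = 1 from rfl]
      exact ⟨{ toFun := fun _ => 0
               invFun := fun _ => P0
               left_inv := fun P => hu _ _
               right_inv := fun i => (Fin.fin_one_eq_zero i).symm }⟩
  | succ k ih =>
      intro s hs
      obtain ⟨a, ha⟩ := Finset.card_pos.mp (show 0 < s.card by omega)
      have e1 : M s ≃ Σ b : ↥(s.erase a), {P : M s // partnerFun ha P = b} :=
        (Equiv.sigmaFiberEquiv (partnerFun ha)).symm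
      have e2 : ∀ b : ↥(s.erase a), {P : M s // partnerFun ha P = b} ≃ Fin (df k) := by
        intro b
        have hcard : ((s.erase a).erase b.1).card = 2 * k := by
          rw [Finset.card_erase_of_mem b.2, Finset.card_erase_of_mem ha]
          omega
        exact (matchFiberEquiv ha b.2).trans (Classical.choice (ih _ hcard))
      have e3 : M s ≃ Σ _b : ↥(s.erase a), Fin (df k) :=
        e1.trans (Equiv.sigmaCongrRight e2)
      have hcard : Fintype.card (Σ _b : ↥(s.erase a), Fin (df k))
          = Fintype.card (Fin (df (k + 1))) := by
        rw [Fintype.card_sigma, Fintype.card_fin]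
        simp only [Fintype.card_fin]
        rw [Finset.sum_const, smul_eq_mul, Finset.card_univ, Fintype.card_coe,
          Finset.card_erase_of_mem ha, hs]
        show (2 * (k + 1) - 1) * df k = df (k + 1)
        rw [show df (k + 1) = (2 * k + 1) * df k from rfl,
          show 2 * (k + 1) - 1 = 2 * k + 1 by omega]
      exact ⟨e3.trans (Fintype.equivOfCardEq hcard)⟩

end Matchings

end Osc

theorem matchings_equiv_oscillating_tableaux (n : ℕ) :
    Nonempty (
      {P : Finpartition (Finset.univ : Finset (Fin (2 * n))) //
        ∀ b ∈ P.parts, b.card = 2} ≃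
      {mu : Fin (2 * n + 1) → YoungDiagram // IsOscillating n mu}) := by
  obtain ⟨em⟩ := Osc.m_equiv_fin n (Finset.univ : Finset (Fin (2 * n)))
    (by rw [Finset.card_univ, Fintype.card_fin])
  obtain ⟨eo⟩ := Osc.ot_equiv_fin (2 * n) ⊥
  rw [Osc.p_two_mul] at eo
  have eiso : {mu : Fin (2 * n + 1) → YoungDiagram // IsOscillating n mu} ≃ Osc.OT (2 * n) ⊥ :=
    Equiv.subtypeEquivRight (fun mu => by
      constructor
      · rintro ⟨h1, h2, h3⟩
        exact ⟨h1, h2, fun i => h3 i.1 i.2⟩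
      · rintro ⟨h1, h2, h3⟩
        exact ⟨h1, h2, fun i hi => h3 ⟨i, hi⟩⟩)
  exact ⟨em.trans ((eiso.trans eo).symm)⟩
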